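/- Let m be a Hessenberg function of length n (with m_n = n), let λ=(λ_1≥⋯≥λ_ℓ) be a partition of n, and let α=(λ_ℓ, λ_{ℓ-1}, …, λ_1) be the composition obtained by reversing λ. Then for every d ≥ 0, the number of admissible tableaux T of shape λ for m with Tymoczko statistic dim(T)=d equals the number of sequencings q of [n] such that (q,α) is an ordered path cover of the complement digraph of D(m) with des q = d. (By Tymoczko's paving theorem, the left-hand side is the Betti number β_{2d} of the regular Hessenberg variety H(m,s) for s a regular matrix of Jordan type λ, and the right-hand side is the coefficient c_{d,λ}(m) of t^d m_λ in ω X_{G(m)}(x,t).) -/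

import Mathlib

open scoped Classical
open Finset

noncomputable section

/-- The monomial quasisymmetric function `M_α` (in variables `x_1, x_2, …` indexed by
positive natural numbers), as a multivariate power series with coefficients in `ℤ[t]`. -/
def MQ (α : List ℕ) : MvPowerSeries ℕ (Polynomial ℤ) :=
  fun d => if ∃ f : Fin α.length → ℕ, StrictMono f ∧ (∀ j, 0 < f j) ∧
      d = ∑ j, Finsupp.single (f j) (α.get j) then 1 else 0

/-- `β` is a composition of `n`: a list of positive integers summing to `n`. -/
def IsComp (n : ℕ) (β : List ℕ) : Prop := (∀ b ∈ β, 0 < b) ∧ β.sum = n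

/-- The bar set of a composition: its proper partial sums `β_1, β_1+β_2, …`. -/
def barSet (β : List ℕ) : Set ℕ := {s | ∃ i, 0 < i ∧ i < β.length ∧ s = (β.take i).sum}

/-- A sequencing of a finite vertex set `V`: a list enumerating `V` without repetition. -/
def IsSeq (V : Finset ℕ) (q : List ℕ) : Prop := q.Nodup ∧ q.toFinset = V

/-- `(q, β)` is an ordered path cover of the digraph `D` on vertex set `V`:
`q` is a sequencing of `V`, `β` is a composition of `|V|`, and every pair of
consecutive entries of `q` lying in the same block of `β` is a directed edge of `D`. -/
def IsOPC (V : Finset ℕ) (D : ℕ → ℕ → Prop) (q : List ℕ) (β : List ℕ) : Prop :=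
  IsSeq V q ∧ IsComp q.length β ∧
    ∀ k, k + 1 < q.length → (k + 1) ∉ barSet β → D (q.getD k 0) (q.getD (k + 1) 0)

/-- `asc q`: the number of pairs `{u,v}` with `u < v`, `v` appearing later in `q` than `u`,
such that either both `u→v` and `v→u` are edges of `D` or neither is. -/
def ascStat (D : ℕ → ℕ → Prop) (q : List ℕ) : ℕ :=
  ((q.toFinset ×ˢ q.toFinset).filter fun p =>
    p.1 < p.2 ∧ q.idxOf p.1 < q.idxOf p.2 ∧ (D p.1 p.2 ↔ D p.2 p.1)).card

/-- `des q`: the number of pairs `{u,v}` with `v < u`, `v` appearing later in `q` than `u`,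
such that either both `u→v` and `v→u` are edges of `D` or neither is. -/
def desStat (D : ℕ → ℕ → Prop) (q : List ℕ) : ℕ :=
  ((q.toFinset ×ˢ q.toFinset).filter fun p =>
    p.2 < p.1 ∧ q.idxOf p.1 < q.idxOf p.2 ∧ (D p.1 p.2 ↔ D p.2 p.1)).card

/-- The path quasisymmetric function `Ξ_D(x,t) = Σ_{(q,β)} t^{asc q} M_β`. -/
def Xi (V : Finset ℕ) (D : ℕ → ℕ → Prop) : MvPowerSeries ℕ (Polynomial ℤ) :=
  ∑ᶠ (q : List ℕ) (β : List ℕ),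
    if IsOPC V D q β then
      (MvPowerSeries.C (σ := ℕ) (R := Polynomial ℤ)) (Polynomial.X ^ ascStat D q) * MQ β
    else 0

/-- `asc κ` for a coloring: the number of edges `{u,v}` with `u < v` and `κ u < κ v`. -/
def ascColor (V : Finset ℕ) (A : ℕ → ℕ → Prop) (κ : ℕ → ℕ) : ℕ :=
  ((V ×ˢ V).filter fun p => A p.1 p.2 ∧ p.1 < p.2 ∧ κ p.1 < κ p.2).card

/-- A proper coloring of the graph with adjacency `A` on vertex set `V`, with colors the
positive integers (normalized to be `0` off `V`). -/
def IsProperColoring (V : Finset ℕ) (A : ℕ → ℕ → Prop) (κ : ℕ → ℕ) : Prop :=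
  (∀ v, v ∉ V → κ v = 0) ∧ (∀ v ∈ V, 0 < κ v) ∧ ∀ u v, A u v → κ u ≠ κ v

/-- The chromatic quasisymmetric function `X_G(x,t) = Σ_κ t^{asc κ} x_κ`, defined
coefficientwise: the coefficient of a monomial `d` is the sum of `t^{asc κ}` over all
proper colorings `κ` whose associated monomial is `d`. -/
def XG (V : Finset ℕ) (A : ℕ → ℕ → Prop) : MvPowerSeries ℕ (Polynomial ℤ) :=
  fun d => ∑ᶠ κ : ℕ → ℕ,
    if IsProperColoring V A κ ∧ (∑ v ∈ V, Finsupp.single (κ v) 1) = d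
    then Polynomial.X ^ ascColor V A κ else 0

/-- The complement of a digraph `D` on vertex set `V`. -/
def Dcomp (V : Finset ℕ) (D : ℕ → ℕ → Prop) : ℕ → ℕ → Prop :=
  fun u v => u ∈ V ∧ v ∈ V ∧ u ≠ v ∧ ¬ D u v

/-- `m` is a Hessenberg function of length `n` (with the convention `m n = n`):
`m_1 ≤ ⋯ ≤ m_{n-1} ≤ n` and `i ≤ m_i` for all `i`. -/
def IsHess (n : ℕ) (m : ℕ → ℕ) : Prop :=
  (∀ i, 1 ≤ i → i ≤ n - 1 → i ≤ m i ∧ m i ≤ n) ∧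
  (∀ i j, 1 ≤ i → i ≤ j → j ≤ n - 1 → m i ≤ m j) ∧ m n = n

/-- The digraph `D(m)` on `[n] = {1,…,n}`: edge `u → v` iff `v ≺ u` in the natural unit
interval order `P(m)`, i.e. iff `u > m v`. -/
def Dm (n : ℕ) (m : ℕ → ℕ) : ℕ → ℕ → Prop :=
  fun u v => u ∈ Finset.Icc 1 n ∧ v ∈ Finset.Icc 1 n ∧ m v < u

/-- The incomparability graph `G(m)` on `[n]`: for `u < v`, `u` and `v` are adjacent
iff `v ≤ m u`. -/
def Gm (n : ℕ) (m : ℕ → ℕ) : ℕ → ℕ → Prop :=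
  fun u v => u ∈ Finset.Icc 1 n ∧ v ∈ Finset.Icc 1 n ∧
    ((u < v ∧ v ≤ m u) ∨ (v < u ∧ u ≤ m v))

/-- `l` is a partition of `n`: a weakly decreasing list of positive integers summing to `n`. -/
def IsPartitionOf (n : ℕ) (l : List ℕ) : Prop :=
  l.Pairwise (· ≥ ·) ∧ (∀ a ∈ l, 0 < a) ∧ l.sum = n

/-- The boxes of the Young diagram of `l`, as pairs `(row, column)` (`0`-indexed,
rows numbered from the top). -/
def YBoxes (l : List ℕ) : Finset (ℕ × ℕ) :=
  (Finset.range l.length ×ˢ Finset.range l.sum).filter fun p => p.2 < l.getD p.1 0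

/-- A tableau of shape `l`: a bijective filling of the boxes of the Young diagram of `l`
with the numbers `1,…,n` (normalized to be `0` off the diagram). -/
def IsTableau (n : ℕ) (l : List ℕ) (T : ℕ × ℕ → ℕ) : Prop :=
  (∀ p, p ∉ YBoxes l → T p = 0) ∧ Set.BijOn T (YBoxes l) (Finset.Icc 1 n)

/-- `T` is admissible for `m`: whenever an entry `k` occupies the box immediately to the
left of an entry `j` in a row, then `k ≤ m j`. -/
def Admissible (m : ℕ → ℕ) (l : List ℕ) (T : ℕ × ℕ → ℕ) : Prop :=
  ∀ r c, (r, c) ∈ YBoxes l → (r, c + 1) ∈ YBoxes l → T (r, c) ≤ m (T (r, c + 1))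

/-- The Tymoczko statistic `dim T`: the number of ordered pairs `(i,k)` of entries
(`i = T pp.1`, `k = T pp.2`) such that EITHER `i` and `k` are in the same row with `i`
to the left of `k`, `k < i`, and if some entry `j` occupies the box immediately to the
right of `k` then `i ≤ m j`; OR `i` is in a strictly lower row than `k` and `k < i ≤ m k`. -/
def dimT (m : ℕ → ℕ) (l : List ℕ) (T : ℕ × ℕ → ℕ) : ℕ :=
  ((YBoxes l ×ˢ YBoxes l).filter fun pp =>
    (pp.1.1 = pp.2.1 ∧ pp.1.2 < pp.2.2 ∧ T pp.2 < T pp.1 ∧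
      ((pp.2.1, pp.2.2 + 1) ∈ YBoxes l → T pp.1 ≤ m (T (pp.2.1, pp.2.2 + 1)))) ∨
    (pp.2.1 < pp.1.1 ∧ T pp.2 < T pp.1 ∧ T pp.1 ≤ m (T pp.2))).card

def Wd (l : List ℕ) (r : ℕ) : ℕ := (l.drop r).sum

lemma Wd_zero (l : List ℕ) : Wd l 0 = l.sum := rfl

lemma Wd_anti (l : List ℕ) {i j : ℕ} (h : i ≤ j) : Wd l j ≤ Wd l i := by
  have h1 : l.drop j = (l.drop i).drop (j - i) := by
    rw [List.drop_drop]; congr 1; omega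
  have h2 := List.sum_take_add_sum_drop (l.drop i) (j - i)
  unfold Wd; rw [h1]; omega

lemma Wd_succ (l : List ℕ) {r : ℕ} (h : r < l.length) : Wd l r = l.getD r 0 + Wd l (r + 1) := by
  unfold Wd
  rw [List.drop_eq_getElem_cons h, List.sum_cons, List.getD_eq_getElem l 0 h]

lemma Wd_len_le (l : List ℕ) {r : ℕ} (h : l.length ≤ r) : Wd l r = 0 := by
  unfold Wd; rw [List.drop_eq_nil_of_le h]; rfl

def posB (l : List ℕ) (p : ℕ × ℕ) : ℕ := Wd l (p.1 + 1) + p.2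

lemma exists_rowOf (l : List ℕ) (k : ℕ) : ∃ r, Wd l (r + 1) ≤ k :=
  ⟨l.length, by rw [Wd_len_le l (by omega)]; omega⟩

def rowOf (l : List ℕ) (k : ℕ) : ℕ := Nat.find (exists_rowOf l k)

lemma rowOf_le (l : List ℕ) (k : ℕ) : Wd l (rowOf l k + 1) ≤ k := by
  unfold rowOf; exact Nat.find_spec (exists_rowOf l k)

lemma rowOf_min (l : List ℕ) (k r : ℕ) (h : Wd l (r + 1) ≤ k) : rowOf l k ≤ r := by
  unfold rowOf; exact Nat.find_le h

lemma rowOf_gt (l : List ℕ) {k : ℕ} (hk : k < l.sum) : k < Wd l (rowOf l k) := by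
  rcases Nat.eq_zero_or_pos (rowOf l k) with h | h
  · rw [h, Wd_zero]; exact hk
  · by_contra hc
    push_neg at hc
    have := rowOf_min l k (rowOf l k - 1)
      (by rw [show rowOf l k - 1 + 1 = rowOf l k by omega]; exact hc)
    omega

lemma rowOf_lt_length (l : List ℕ) {k : ℕ} (hk : k < l.sum) : rowOf l k < l.length := by
  by_contra h
  have h1 := Wd_len_le l (show l.length ≤ rowOf l k by omega)
  have h2 := rowOf_gt l hk
  omega

lemma rowOf_eq (l : List ℕ) {k r : ℕ} (h1 : Wd l (r + 1) ≤ k) (h2 : k < Wd l r) :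
    rowOf l k = r := by
  have hle : rowOf l k ≤ r := rowOf_min l k r h1
  rcases eq_or_lt_of_le hle with h | h
  · exact h
  · exfalso
    have h3 := rowOf_le l k
    have h4 := Wd_anti l (show rowOf l k + 1 ≤ r by omega)
    omega

def boxB (l : List ℕ) (k : ℕ) : ℕ × ℕ := (rowOf l k, k - Wd l (rowOf l k + 1))

lemma getD_le_sum (l : List ℕ) {r : ℕ} (h : r < l.length) : l.getD r 0 ≤ l.sum := by
  have h1 := Wd_succ l h
  have h2 : Wd l r ≤ Wd l 0 := Wd_anti l (Nat.zero_le r)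
  rw [Wd_zero] at h2; omega

lemma mem_YBoxes {l : List ℕ} {p : ℕ × ℕ} :
    p ∈ YBoxes l ↔ p.1 < l.length ∧ p.2 < l.getD p.1 0 := by
  unfold YBoxes
  simp only [Finset.mem_filter, Finset.mem_product, Finset.mem_range]
  constructor
  · rintro ⟨⟨h1, _⟩, h3⟩; exact ⟨h1, h3⟩
  · rintro ⟨h1, h3⟩; exact ⟨⟨h1, lt_of_lt_of_le h3 (getD_le_sum l h1)⟩, h3⟩

lemma posB_lt {l : List ℕ} {p : ℕ × ℕ} (hp : p ∈ YBoxes l) : posB l p < l.sum := by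
  rw [mem_YBoxes] at hp
  have h := Wd_succ l hp.1
  have h2 : Wd l p.1 ≤ Wd l 0 := Wd_anti l (Nat.zero_le p.1)
  rw [Wd_zero] at h2
  unfold posB; omega

lemma rowOf_posB {l : List ℕ} {p : ℕ × ℕ} (hp : p ∈ YBoxes l) : rowOf l (posB l p) = p.1 := by
  rw [mem_YBoxes] at hp
  have h := Wd_succ l hp.1
  exact rowOf_eq l (by unfold posB; omega) (by unfold posB; omega)

lemma boxB_posB {l : List ℕ} {p : ℕ × ℕ} (hp : p ∈ YBoxes l) : boxB l (posB l p) = p := by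
  have h := rowOf_posB hp
  unfold boxB
  rw [h]
  have : posB l p - Wd l (p.1 + 1) = p.2 := by unfold posB; omega
  rw [this]

lemma boxB_mem {l : List ℕ} {k : ℕ} (hk : k < l.sum) : boxB l k ∈ YBoxes l := by
  rw [mem_YBoxes]
  refine ⟨rowOf_lt_length l hk, ?_⟩
  have h1 := rowOf_le l k
  have h2 := rowOf_gt l hk
  have h3 := Wd_succ l (rowOf_lt_length l hk)
  simp only [boxB]
  omega

lemma posB_boxB {l : List ℕ} {k : ℕ} (hk : k < l.sum) : posB l (boxB l k) = k := by
  have h1 := rowOf_le l k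
  simp only [posB, boxB]
  omega

lemma posB_row_lt {l : List ℕ} {p p' : ℕ × ℕ} (hp : p ∈ YBoxes l) (hp' : p' ∈ YBoxes l)
    (h : p.1 < p'.1) : posB l p' < posB l p := by
  rw [mem_YBoxes] at hp hp'
  have h1 := Wd_succ l hp'.1
  have h2 := Wd_anti l (show p.1 + 1 ≤ p'.1 by omega)
  simp only [posB]
  omega

lemma posB_lt_posB {l : List ℕ} {p p' : ℕ × ℕ} (hp : p ∈ YBoxes l) (hp' : p' ∈ YBoxes l) :
    posB l p < posB l p' ↔ p'.1 < p.1 ∨ (p.1 = p'.1 ∧ p.2 < p'.2) := by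
  constructor
  · intro h
    rcases lt_trichotomy p.1 p'.1 with hr | hr | hr
    · have := posB_row_lt hp hp' hr; omega
    · refine Or.inr ⟨hr, ?_⟩
      simp only [posB, hr] at h
      omega
    · exact Or.inl hr
  · rintro (hr | ⟨hr, hc⟩)
    · exact posB_row_lt hp' hp hr
    · simp only [posB, hr]
      omega


lemma take_reverse_sum (l : List ℕ) {i : ℕ} (h : i ≤ l.length) :
    (l.reverse.take i).sum = Wd l (l.length - i) := by
  have h2 : (l.drop (l.length - i)).reverse = l.reverse.take (l.length - (l.length - i)) :=
    List.reverse_drop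
  rw [show l.length - (l.length - i) = i by omega] at h2
  rw [← h2, List.sum_reverse]
  rfl

lemma mem_barSet_reverse {l : List ℕ} {s : ℕ} :
    s ∈ barSet l.reverse ↔ ∃ j, 1 ≤ j ∧ j + 1 ≤ l.length ∧ s = Wd l j := by
  unfold barSet
  simp only [Set.mem_setOf_eq, List.length_reverse]
  constructor
  · rintro ⟨i, hi0, hiL, rfl⟩
    exact ⟨l.length - i, by omega, by omega, take_reverse_sum l (show i ≤ l.length by omega)⟩
  · rintro ⟨j, hj1, hjL, rfl⟩
    refine ⟨l.length - j, by omega, by omega, ?_⟩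
    rw [take_reverse_sum l (by omega), show l.length - (l.length - j) = j by omega]

lemma notbar_iff {l : List ℕ} (hl' : ∀ a ∈ l, 0 < a) {k : ℕ} (hk : k + 1 < l.sum) :
    (k + 1) ∉ barSet l.reverse ↔ rowOf l (k + 1) = rowOf l k := by
  constructor
  · intro hbar
    by_contra hne
    apply hbar
    rw [mem_barSet_reverse]
    have h1 := rowOf_le l k
    have h2 := rowOf_gt l (show k < l.sum by omega)
    have h3 := rowOf_lt_length l (show k < l.sum by omega)
    have hk1 : k + 1 = Wd l (rowOf l k) := by
      by_contra h
      exact hne (rowOf_eq l (by omega) (by omega))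
    refine ⟨rowOf l k, ?_, by omega, hk1⟩
    by_contra h0
    have h4 : rowOf l k = 0 := by omega
    rw [h4, Wd_zero] at hk1
    omega
  · intro heq hbar
    rw [mem_barSet_reverse] at hbar
    obtain ⟨j, hj1, hjL, hWd⟩ := hbar
    have hjlen : j < l.length := by omega
    have hpos : 0 < l.getD j 0 := by
      rw [List.getD_eq_getElem l 0 hjlen]
      exact hl' _ (List.getElem_mem hjlen)
    have hWs := Wd_succ l hjlen
    have hrk : rowOf l k = j := rowOf_eq l (by omega) (by omega)
    have h5 := rowOf_gt l hk
    rw [heq, hrk] at h5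
    omega

def seqOf (l : List ℕ) (T : ℕ × ℕ → ℕ) : List ℕ :=
  (List.range l.sum).map fun k => T (boxB l k)

lemma seqOf_length (l : List ℕ) (T : ℕ × ℕ → ℕ) : (seqOf l T).length = l.sum := by
  simp [seqOf]

lemma seqOf_getElem (l : List ℕ) (T : ℕ × ℕ → ℕ) {k : ℕ} (hk : k < (seqOf l T).length) :
    (seqOf l T)[k] = T (boxB l k) := by
  simp [seqOf]

lemma seqOf_getD (l : List ℕ) (T : ℕ × ℕ → ℕ) {k : ℕ} (hk : k < l.sum) :
    (seqOf l T).getD k 0 = T (boxB l k) := by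
  rw [List.getD_eq_getElem _ 0 (by rw [seqOf_length]; exact hk)]
  exact seqOf_getElem l T (by rw [seqOf_length]; exact hk)

lemma seqOf_nodup {n : ℕ} {l : List ℕ} {T : ℕ × ℕ → ℕ} (hn : l.sum = n)
    (hT : IsTableau n l T) : (seqOf l T).Nodup := by
  apply List.Nodup.map_on _ List.nodup_range
  intro x hx y hy hxy
  rw [List.mem_range] at hx hy
  have hbx := boxB_mem hx
  have hby := boxB_mem hy
  have := hT.2.2.1 (Finset.mem_coe.mpr hbx) (Finset.mem_coe.mpr hby) hxy
  rw [← posB_boxB hx, ← posB_boxB hy, this]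

lemma seqOf_mem {n : ℕ} {l : List ℕ} {T : ℕ × ℕ → ℕ} (hn : l.sum = n)
    (hT : IsTableau n l T) {p : ℕ × ℕ} (hp : p ∈ YBoxes l) : T p ∈ seqOf l T := by
  rw [seqOf, List.mem_map]
  exact ⟨posB l p, by rw [List.mem_range]; exact posB_lt hp, by rw [boxB_posB hp]⟩

lemma seqOf_toFinset {n : ℕ} {l : List ℕ} {T : ℕ × ℕ → ℕ} (hn : l.sum = n)
    (hT : IsTableau n l T) : (seqOf l T).toFinset = Finset.Icc 1 n := by
  apply Finset.eq_of_subset_of_card_le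
  · intro u hu
    rw [List.mem_toFinset, seqOf, List.mem_map] at hu
    obtain ⟨k, hk, rfl⟩ := hu
    rw [List.mem_range] at hk
    exact hT.2.1 (Finset.mem_coe.mpr (boxB_mem hk))
  · rw [List.toFinset_card_of_nodup (seqOf_nodup hn hT), seqOf_length, Nat.card_Icc, hn]
    omega

lemma seqOf_indexOf {n : ℕ} {l : List ℕ} {T : ℕ × ℕ → ℕ} (hn : l.sum = n)
    (hT : IsTableau n l T) {p : ℕ × ℕ} (hp : p ∈ YBoxes l) :
    (seqOf l T).idxOf (T p) = posB l p := by
  have hmem := seqOf_mem hn hT hp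
  have hlt := List.idxOf_lt_length_iff.mpr hmem
  have h1 : (seqOf l T)[(seqOf l T).idxOf (T p)] = T p := List.getElem_idxOf hlt
  have hplt : posB l p < (seqOf l T).length := by rw [seqOf_length]; exact posB_lt hp
  have h2 : (seqOf l T)[posB l p] = T p := by
    rw [seqOf_getElem l T hplt, boxB_posB hp]
  exact (seqOf_nodup hn hT).getElem_inj_iff.mp (h1.trans h2.symm)

lemma le_m_self {n : ℕ} {m : ℕ → ℕ} (hm : IsHess n m) {u : ℕ} (hu : u ∈ Finset.Icc 1 n) :
    u ≤ m u := by
  rw [Finset.mem_Icc] at hu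
  rcases eq_or_lt_of_le hu.2 with h | h
  · rw [h, hm.2.2]
  · exact (hm.1 u hu.1 (by omega)).1


lemma card_filter_insert {a : ℕ} {s : Finset ℕ} (h : a ∉ s) (p : ℕ → Prop) [DecidablePred p] :
    ((insert a s).filter p).card = (s.filter p).card + (if p a then 1 else 0) := by
  by_cases hpa : p a
  · rw [Finset.filter_insert, if_pos hpa, if_pos hpa,
      Finset.card_insert_of_notMem (fun hh => h (Finset.mem_of_mem_filter a hh))]
  · rw [Finset.filter_insert, if_neg hpa, if_neg hpa]
    omega

lemma countAux (f g : ℕ → Prop) (b : ℕ) (hgb : g b)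
    (H2 : ∀ t, t < b → ¬ g t → f t)
    (H3 : ∀ t, t + 1 < b → ¬ g (t + 1) → f t) :
    ∀ N a, b - a = N → a ≤ b →
      ((Finset.Ico a b).filter fun t => f t ∧ g (t + 1)).card
        = ((Finset.Ico a b).filter fun t => f t ∧ g t).card + (if g a then 0 else 1) := by
  intro N
  induction N with
  | zero =>
    intro a hN hab
    have hab' : a = b := by omega
    subst hab'
    simp [hgb]
  | succ N ih =>
    intro a hN hab
    have hab' : a < b := by omega
    have hins : Finset.Ico a b = insert a (Finset.Ico (a + 1) b) :=
      (Finset.insert_Ico_succ_left_eq_Ico hab').symm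
    have hnotmem : a ∉ Finset.Ico (a + 1) b := by simp
    have ihh := ih (a + 1) (by omega) (by omega)
    have hfa1 : ¬ g (a + 1) → f a := by
      intro h
      rcases eq_or_lt_of_le (show a + 1 ≤ b by omega) with h' | h'
      · exact absurd (h' ▸ hgb) h
      · exact H3 a h' h
    have hfa2 : ¬ g a → f a := H2 a hab'
    rw [hins, card_filter_insert hnotmem, card_filter_insert hnotmem, ihh]
    rcases Classical.em (g a) with h1 | h1 <;> rcases Classical.em (g (a + 1)) with h2 | h2
    · by_cases h3 : f a <;> simp [h1, h2, h3]
    · have h3 : f a := hfa1 h2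
      simp [h1, h2, h3]
    · have h3 : f a := hfa2 h1
      simp [h1, h2, h3]
    · have h3 : f a := hfa2 h1
      simp [h1, h2, h3]

lemma boxB_succ {l : List ℕ} {k : ℕ} (hk : k + 1 < l.sum)
    (h : rowOf l (k + 1) = rowOf l k) :
    boxB l (k + 1) = ((boxB l k).1, (boxB l k).2 + 1) := by
  have h1 := rowOf_le l k
  simp only [boxB, h]
  have : k + 1 - Wd l (rowOf l k + 1) = (k - Wd l (rowOf l k + 1)) + 1 := by omega
  rw [this]

lemma isOPC_seqOf {n : ℕ} {m : ℕ → ℕ} {l : List ℕ} {T : ℕ × ℕ → ℕ}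
    (hl : IsPartitionOf n l) (hT : IsTableau n l T) (hA : Admissible m l T) :
    IsOPC (Finset.Icc 1 n) (Dcomp (Finset.Icc 1 n) (Dm n m)) (seqOf l T) l.reverse := by
  have hn : l.sum = n := hl.2.2
  refine ⟨⟨seqOf_nodup hn hT, seqOf_toFinset hn hT⟩,
    ⟨fun b hb => hl.2.1 b (List.mem_reverse.mp hb), ?_⟩, ?_⟩
  · rw [List.sum_reverse, seqOf_length]
  · intro k hk1 hbar
    rw [seqOf_length] at hk1
    have hrow : rowOf l (k + 1) = rowOf l k := (notbar_iff hl.2.1 hk1).mp hbar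
    have hbox1 := boxB_succ hk1 hrow
    have hpY : boxB l k ∈ YBoxes l := boxB_mem (by omega)
    have hp1Y : ((boxB l k).1, (boxB l k).2 + 1) ∈ YBoxes l := by
      rw [← hbox1]; exact boxB_mem hk1
    rw [seqOf_getD l T (by omega), seqOf_getD l T hk1, hbox1]
    refine ⟨hT.2.1 (Finset.mem_coe.mpr hpY), hT.2.1 (Finset.mem_coe.mpr hp1Y), ?_, ?_⟩
    · intro h
      have := hT.2.2.1 (Finset.mem_coe.mpr hpY) (Finset.mem_coe.mpr hp1Y) h
      have h2 : (boxB l k).2 = (boxB l k).2 + 1 := congrArg Prod.snd this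
      omega
    · rintro ⟨-, -, hlt⟩
      have h3 := hA (boxB l k).1 (boxB l k).2 (by rw [Prod.mk.eta]; exact hpY) hp1Y
      rw [Prod.mk.eta] at h3
      omega

def tabOf (l : List ℕ) (q : List ℕ) : ℕ × ℕ → ℕ :=
  fun p => if p ∈ YBoxes l then q.getD (posB l p) 0 else 0

lemma tabOf_isTableau {n : ℕ} {l : List ℕ} {q : List ℕ}
    (hn : l.sum = n) (hnd : q.Nodup) (htf : q.toFinset = Finset.Icc 1 n)
    (hql : q.length = l.sum) : IsTableau n l (tabOf l q) := by
  refine ⟨fun p hp => if_neg hp, ?_, ?_, ?_⟩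
  · intro p hp
    rw [Finset.mem_coe] at hp
    have hlt : posB l p < q.length := by rw [hql]; exact posB_lt hp
    simp only [tabOf, if_pos hp]
    rw [Finset.mem_coe, ← htf, List.mem_toFinset, List.getD_eq_getElem q 0 hlt]
    exact List.getElem_mem hlt
  · intro p hp p' hp' he
    rw [Finset.mem_coe] at hp hp'
    have hlt : posB l p < q.length := by rw [hql]; exact posB_lt hp
    have hlt' : posB l p' < q.length := by rw [hql]; exact posB_lt hp'
    simp only [tabOf, if_pos hp, if_pos hp'] at he
    rw [List.getD_eq_getElem q 0 hlt, List.getD_eq_getElem q 0 hlt'] at he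
    have := hnd.getElem_inj_iff.mp he
    rw [← boxB_posB hp, ← boxB_posB hp', this]
  · intro u hu
    rw [Finset.mem_coe, ← htf, List.mem_toFinset, List.mem_iff_getElem] at hu
    obtain ⟨k, hk, rfl⟩ := hu
    have hks : k < l.sum := by omega
    refine ⟨boxB l k, Finset.mem_coe.mpr (boxB_mem hks), ?_⟩
    simp only [tabOf, if_pos (boxB_mem hks), posB_boxB hks]
    exact List.getD_eq_getElem q 0 hk

lemma tabOf_admissible {n : ℕ} {m : ℕ → ℕ} {l : List ℕ} {q : List ℕ}
    (hl : IsPartitionOf n l)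
    (hq : IsOPC (Finset.Icc 1 n) (Dcomp (Finset.Icc 1 n) (Dm n m)) q l.reverse) :
    Admissible m l (tabOf l q) := by
  have hql : q.length = l.sum := by
    have := hq.2.1.2
    rw [List.sum_reverse] at this
    omega
  intro r c h1 h2
  have hpos1 : posB l (r, c + 1) = posB l (r, c) + 1 := by
    show Wd l (r + 1) + (c + 1) = Wd l (r + 1) + c + 1
    omega
  have hk1 : posB l (r, c) + 1 < q.length := by
    rw [hql, ← hpos1]; exact posB_lt h2
  have hbar : (posB l (r, c) + 1) ∉ barSet l.reverse := by
    rw [notbar_iff hl.2.1 (by rw [← hql]; exact hk1), ← hpos1]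
    have e1 : rowOf l (posB l (r, c + 1)) = r := rowOf_posB h2
    have e2 : rowOf l (posB l (r, c)) = r := rowOf_posB h1
    rw [e1, e2]
  have hD := hq.2.2 (posB l (r, c)) hk1 hbar
  obtain ⟨hu, hv, hne, hnDm⟩ := hD
  simp only [tabOf, if_pos h1, if_pos h2, hpos1]
  by_contra hc
  push_neg at hc
  exact hnDm ⟨hu, hv, hc⟩

lemma seqOf_tabOf {l : List ℕ} {q : List ℕ} (hql : q.length = l.sum) :
    seqOf l (tabOf l q) = q := by
  apply List.ext_getElem (by rw [seqOf_length, hql])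
  intro k h1 h2
  rw [seqOf_length] at h1
  rw [seqOf_getElem _ _ (by rw [seqOf_length]; exact h1)]
  simp only [tabOf, if_pos (boxB_mem h1), posB_boxB h1]
  exact List.getD_eq_getElem q 0 h2

lemma tabOf_seqOf {n : ℕ} {l : List ℕ} {T : ℕ × ℕ → ℕ} (hT : IsTableau n l T) :
    tabOf l (seqOf l T) = T := by
  funext p
  by_cases hp : p ∈ YBoxes l
  · rw [tabOf, if_pos hp, seqOf_getD l T (posB_lt hp), boxB_posB hp]
  · rw [tabOf, if_neg hp, (hT.1 p hp).symm]


lemma mk_mem_YBoxes {l : List ℕ} {r c : ℕ} :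
    (r, c) ∈ YBoxes l ↔ r < l.length ∧ c < l.getD r 0 := mem_YBoxes

lemma desStat_seqOf {n : ℕ} {m : ℕ → ℕ} {l : List ℕ} {T : ℕ × ℕ → ℕ}
    (hm : IsHess n m) (hl : IsPartitionOf n l) (hT : IsTableau n l T)
    (hA : Admissible m l T) :
    desStat (Dcomp (Finset.Icc 1 n) (Dm n m)) (seqOf l T) = dimT m l T := by
  have hn : l.sum = n := hl.2.2
  have htf : (seqOf l T).toFinset = Finset.Icc 1 n := seqOf_toFinset hn hT
  -- Step A : simplify the des predicate
  have stepA : desStat (Dcomp (Finset.Icc 1 n) (Dm n m)) (seqOf l T)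
      = ((Finset.Icc 1 n ×ˢ Finset.Icc 1 n).filter fun p =>
          p.2 < p.1 ∧ (seqOf l T).idxOf p.1 < (seqOf l T).idxOf p.2 ∧ p.1 ≤ m p.2).card := by
    unfold desStat
    rw [htf]
    congr 1
    apply Finset.filter_congr
    intro p hp
    simp only [Finset.mem_product] at hp
    have h1 : p.1 ≤ m p.1 := le_m_self hm hp.1
    have h2 : p.2 ≤ m p.2 := le_m_self hm hp.2
    apply and_congr_right
    intro hlt
    apply and_congr_right
    intro _
    constructor
    · intro h
      by_contra hc
      push_neg at hc
      have hvu : Dcomp (Finset.Icc 1 n) (Dm n m) p.2 p.1 :=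
        ⟨hp.2, hp.1, by omega, by rintro ⟨-, -, h'⟩; omega⟩
      exact (h.mpr hvu).2.2.2 ⟨hp.1, hp.2, hc⟩
    · intro hle
      constructor
      · intro _
        exact ⟨hp.2, hp.1, by omega, by rintro ⟨-, -, h'⟩; omega⟩
      · intro _
        exact ⟨hp.1, hp.2, by omega, by rintro ⟨-, -, h'⟩; omega⟩
  -- Step B : transfer from entries to boxes
  have stepB : ((Finset.Icc 1 n ×ˢ Finset.Icc 1 n).filter fun p =>
        p.2 < p.1 ∧ (seqOf l T).idxOf p.1 < (seqOf l T).idxOf p.2 ∧ p.1 ≤ m p.2).card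
      = ((YBoxes l ×ˢ YBoxes l).filter fun pp =>
          T pp.2 < T pp.1 ∧ T pp.1 ≤ m (T pp.2) ∧
            (pp.2.1 < pp.1.1 ∨ (pp.1.1 = pp.2.1 ∧ pp.1.2 < pp.2.2))).card := by
    symm
    apply Finset.card_bij (fun pp _ => (T pp.1, T pp.2))
    · intro pp hpp
      simp only [Finset.mem_filter, Finset.mem_product] at hpp ⊢
      obtain ⟨⟨hp1, hp2⟩, hlt, hle, hdisj⟩ := hpp
      refine ⟨⟨hT.2.1 (Finset.mem_coe.mpr hp1), hT.2.1 (Finset.mem_coe.mpr hp2)⟩, hlt, ?_, hle⟩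
      rw [seqOf_indexOf hn hT hp1, seqOf_indexOf hn hT hp2]
      exact (posB_lt_posB hp1 hp2).mpr hdisj
    · intro pp1 h1 pp2 h2 he
      simp only [Finset.mem_filter, Finset.mem_product] at h1 h2
      have e1 : T pp1.1 = T pp2.1 := congrArg Prod.fst he
      have e2 : T pp1.2 = T pp2.2 := congrArg Prod.snd he
      have q1 := hT.2.2.1 (Finset.mem_coe.mpr h1.1.1) (Finset.mem_coe.mpr h2.1.1) e1
      have q2 := hT.2.2.1 (Finset.mem_coe.mpr h1.1.2) (Finset.mem_coe.mpr h2.1.2) e2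
      exact Prod.ext q1 q2
    · intro uv huv
      simp only [Finset.mem_filter, Finset.mem_product] at huv
      obtain ⟨⟨hu, hv⟩, hlt, hidx, hle⟩ := huv
      obtain ⟨p1, hp1, he1⟩ := hT.2.2.2 (Finset.mem_coe.mpr hu)
      obtain ⟨p2, hp2, he2⟩ := hT.2.2.2 (Finset.mem_coe.mpr hv)
      rw [Finset.mem_coe] at hp1 hp2
      refine ⟨(p1, p2), ?_, ?_⟩
      · simp only [Finset.mem_filter, Finset.mem_product]
        rw [← he1, ← he2] at hlt hidx hle
        rw [seqOf_indexOf hn hT hp1, seqOf_indexOf hn hT hp2] at hidx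
        exact ⟨⟨hp1, hp2⟩, hlt, hle, (posB_lt_posB hp1 hp2).mp hidx⟩
      · exact Prod.ext he1 he2
  -- Step C : split according to rows
  have stepC : ((YBoxes l ×ˢ YBoxes l).filter fun pp =>
        T pp.2 < T pp.1 ∧ T pp.1 ≤ m (T pp.2) ∧
          (pp.2.1 < pp.1.1 ∨ (pp.1.1 = pp.2.1 ∧ pp.1.2 < pp.2.2))).card
      = ((YBoxes l ×ˢ YBoxes l).filter fun pp =>
          pp.2.1 < pp.1.1 ∧ T pp.2 < T pp.1 ∧ T pp.1 ≤ m (T pp.2)).card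
        + ((YBoxes l ×ˢ YBoxes l).filter fun pp =>
          pp.1.1 = pp.2.1 ∧ pp.1.2 < pp.2.2 ∧ T pp.2 < T pp.1 ∧ T pp.1 ≤ m (T pp.2)).card := by
    have hdis : Disjoint
        ((YBoxes l ×ˢ YBoxes l).filter fun pp =>
          pp.2.1 < pp.1.1 ∧ T pp.2 < T pp.1 ∧ T pp.1 ≤ m (T pp.2))
        ((YBoxes l ×ˢ YBoxes l).filter fun pp =>
          pp.1.1 = pp.2.1 ∧ pp.1.2 < pp.2.2 ∧ T pp.2 < T pp.1 ∧ T pp.1 ≤ m (T pp.2)) := by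
      rw [Finset.disjoint_left]
      intro pp h1 h2
      simp only [Finset.mem_filter] at h1 h2
      omega
    rw [← Finset.card_union_of_disjoint hdis]
    congr 1
    ext pp
    simp only [Finset.mem_union, Finset.mem_filter, Finset.mem_product]
    constructor
    · rintro ⟨hmem, hlt, hle, (hc | hc)⟩
      · exact Or.inl ⟨hmem, hc, hlt, hle⟩
      · exact Or.inr ⟨hmem, hc.1, hc.2, hlt, hle⟩
    · rintro (⟨hmem, hc, hlt, hle⟩ | ⟨hmem, hc1, hc2, hlt, hle⟩)
      · exact ⟨hmem, hlt, hle, Or.inl hc⟩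
      · exact ⟨hmem, hlt, hle, Or.inr ⟨hc1, hc2⟩⟩
  -- Step E : split dimT similarly
  have stepE : dimT m l T
      = ((YBoxes l ×ˢ YBoxes l).filter fun pp =>
          pp.2.1 < pp.1.1 ∧ T pp.2 < T pp.1 ∧ T pp.1 ≤ m (T pp.2)).card
        + ((YBoxes l ×ˢ YBoxes l).filter fun pp =>
          pp.1.1 = pp.2.1 ∧ pp.1.2 < pp.2.2 ∧ T pp.2 < T pp.1 ∧
            ((pp.2.1, pp.2.2 + 1) ∈ YBoxes l → T pp.1 ≤ m (T (pp.2.1, pp.2.2 + 1)))).card := by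
    have hdis : Disjoint
        ((YBoxes l ×ˢ YBoxes l).filter fun pp =>
          pp.2.1 < pp.1.1 ∧ T pp.2 < T pp.1 ∧ T pp.1 ≤ m (T pp.2))
        ((YBoxes l ×ˢ YBoxes l).filter fun pp =>
          pp.1.1 = pp.2.1 ∧ pp.1.2 < pp.2.2 ∧ T pp.2 < T pp.1 ∧
            ((pp.2.1, pp.2.2 + 1) ∈ YBoxes l → T pp.1 ≤ m (T (pp.2.1, pp.2.2 + 1)))) := by
      rw [Finset.disjoint_left]
      intro pp h1 h2
      simp only [Finset.mem_filter] at h1 h2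
      omega
    unfold dimT
    rw [← Finset.card_union_of_disjoint hdis]
    congr 1
    ext pp
    simp only [Finset.mem_union, Finset.mem_filter, Finset.mem_product]
    constructor
    · rintro ⟨hmem, (hc | hc)⟩
      · exact Or.inr ⟨hmem, hc⟩
      · exact Or.inl ⟨hmem, hc⟩
    · rintro (⟨hmem, hc⟩ | ⟨hmem, hc⟩)
      · exact ⟨hmem, Or.inr hc⟩
      · exact ⟨hmem, Or.inl hc⟩
  -- Step D : the same-row counts agree
  have stepD : ((YBoxes l ×ˢ YBoxes l).filter fun pp =>
        pp.1.1 = pp.2.1 ∧ pp.1.2 < pp.2.2 ∧ T pp.2 < T pp.1 ∧ T pp.1 ≤ m (T pp.2)).card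
      = ((YBoxes l ×ˢ YBoxes l).filter fun pp =>
          pp.1.1 = pp.2.1 ∧ pp.1.2 < pp.2.2 ∧ T pp.2 < T pp.1 ∧
            ((pp.2.1, pp.2.2 + 1) ∈ YBoxes l → T pp.1 ≤ m (T (pp.2.1, pp.2.2 + 1)))).card := by
    rw [Finset.card_eq_sum_card_fiberwise
        (f := Prod.fst) (t := YBoxes l)
        (fun pp hpp => (Finset.mem_product.mp (Finset.mem_filter.mp hpp).1).1),
      Finset.card_eq_sum_card_fiberwise
        (f := Prod.fst) (t := YBoxes l)
        (fun pp hpp => (Finset.mem_product.mp (Finset.mem_filter.mp hpp).1).1)]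
    apply Finset.sum_congr rfl
    rintro ⟨r, c1⟩ hp1
    have hrc := mk_mem_YBoxes.mp hp1
    have t2 : ((((YBoxes l ×ˢ YBoxes l).filter fun pp =>
          pp.1.1 = pp.2.1 ∧ pp.1.2 < pp.2.2 ∧ T pp.2 < T pp.1 ∧ T pp.1 ≤ m (T pp.2)).filter
            fun pp => pp.1 = (r, c1)).card)
        = ((Finset.Ico (c1 + 1) (l.getD r 0)).filter fun t =>
            T (r, t) < T (r, c1) ∧ ((r, t) ∈ YBoxes l → T (r, c1) ≤ m (T (r, t)))).card := by
      refine Finset.card_bij' (fun pp _ => pp.2.2) (fun t _ => ((r, c1), (r, t))) ?hi2 ?hj2 ?li2 ?ri2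
      case hi2 =>
        intro pp hpp
        simp only [Finset.mem_filter, Finset.mem_product] at hpp ⊢
        obtain ⟨⟨⟨hm1, hm2⟩, heq, hcc, hlt, hle⟩, hfst⟩ := hpp
        have h21 : pp.2.1 = r := by rw [← heq, hfst]
        have hY2 := mem_YBoxes.mp hm2
        rw [h21] at hY2
        refine ⟨Finset.mem_Ico.mpr ⟨?_, hY2.2⟩, ?_, ?_⟩
        · have : pp.1.2 = c1 := by rw [hfst]
          omega
        · rw [← hfst, ← h21]
          exact hlt
        · intro hY
          rw [← hfst, ← h21]
          rw [← h21] at hY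
          exact hle
      case hj2 =>
        intro t ht
        simp only [Finset.mem_filter, Finset.mem_Ico] at ht
        obtain ⟨⟨hta, htb⟩, hf, hg⟩ := ht
        have hmY : (r, t) ∈ YBoxes l := mk_mem_YBoxes.mpr ⟨hrc.1, htb⟩
        exact Finset.mem_filter.mpr ⟨Finset.mem_filter.mpr ⟨Finset.mem_product.mpr ⟨hp1, hmY⟩,
          rfl, (show c1 < t by omega), hf, hg hmY⟩, rfl⟩
      case li2 =>
        intro pp hpp
        simp only [Finset.mem_filter, Finset.mem_product] at hpp
        obtain ⟨⟨⟨hm1, hm2⟩, heq, hcc, hlt, hle⟩, hfst⟩ := hpp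
        have h21 : pp.2.1 = r := by rw [← heq, hfst]
        show ((r, c1), (r, pp.2.2)) = pp
        rw [← hfst, ← h21]
      case ri2 =>
        intro t ht
        rfl
    have t3 : ((((YBoxes l ×ˢ YBoxes l).filter fun pp =>
          pp.1.1 = pp.2.1 ∧ pp.1.2 < pp.2.2 ∧ T pp.2 < T pp.1 ∧
            ((pp.2.1, pp.2.2 + 1) ∈ YBoxes l → T pp.1 ≤ m (T (pp.2.1, pp.2.2 + 1)))).filter
              fun pp => pp.1 = (r, c1)).card)
        = ((Finset.Ico (c1 + 1) (l.getD r 0)).filter fun t =>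
            T (r, t) < T (r, c1) ∧
              ((r, t + 1) ∈ YBoxes l → T (r, c1) ≤ m (T (r, t + 1)))).card := by
      refine Finset.card_bij' (fun pp _ => pp.2.2) (fun t _ => ((r, c1), (r, t))) ?hi3 ?hj3 ?li3 ?ri3
      case hi3 =>
        intro pp hpp
        simp only [Finset.mem_filter, Finset.mem_product] at hpp ⊢
        obtain ⟨⟨⟨hm1, hm2⟩, heq, hcc, hlt, hle⟩, hfst⟩ := hpp
        have h21 : pp.2.1 = r := by rw [← heq, hfst]
        have hY2 := mem_YBoxes.mp hm2
        rw [h21] at hY2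
        refine ⟨Finset.mem_Ico.mpr ⟨?_, hY2.2⟩, ?_, ?_⟩
        · have : pp.1.2 = c1 := by rw [hfst]
          omega
        · rw [← hfst, ← h21]
          exact hlt
        · intro hY
          rw [← hfst, ← h21]
          rw [← h21] at hY
          exact hle hY
      case hj3 =>
        intro t ht
        simp only [Finset.mem_filter, Finset.mem_Ico] at ht
        obtain ⟨⟨hta, htb⟩, hf, hg⟩ := ht
        have hmY : (r, t) ∈ YBoxes l := mk_mem_YBoxes.mpr ⟨hrc.1, htb⟩
        exact Finset.mem_filter.mpr ⟨Finset.mem_filter.mpr ⟨Finset.mem_product.mpr ⟨hp1, hmY⟩,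
          rfl, (show c1 < t by omega), hf, hg⟩, rfl⟩
      case li3 =>
        intro pp hpp
        simp only [Finset.mem_filter, Finset.mem_product] at hpp
        obtain ⟨⟨⟨hm1, hm2⟩, heq, hcc, hlt, hle⟩, hfst⟩ := hpp
        have h21 : pp.2.1 = r := by rw [← heq, hfst]
        show ((r, c1), (r, pp.2.2)) = pp
        rw [← hfst, ← h21]
      case ri3 =>
        intro t ht
        rfl
    have hga : ((r, c1 + 1) ∈ YBoxes l → T (r, c1) ≤ m (T (r, c1 + 1))) := fun h => hA r c1 hp1 h
    have hgb : ((r, l.getD r 0) ∈ YBoxes l → T (r, c1) ≤ m (T (r, l.getD r 0))) := by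
      intro hmem
      exfalso
      have := mk_mem_YBoxes.mp hmem
      omega
    have hH2 : ∀ t, t < l.getD r 0 →
        ¬ ((r, t) ∈ YBoxes l → T (r, c1) ≤ m (T (r, t))) → T (r, t) < T (r, c1) := by
      intro t ht hng
      push_neg at hng
      obtain ⟨hmem, hgt⟩ := hng
      have := le_m_self hm (hT.2.1 (Finset.mem_coe.mpr hmem))
      omega
    have hH3 : ∀ t, t + 1 < l.getD r 0 →
        ¬ ((r, t + 1) ∈ YBoxes l → T (r, c1) ≤ m (T (r, t + 1))) → T (r, t) < T (r, c1) := by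
      intro t ht hng
      push_neg at hng
      obtain ⟨hmem, hgt⟩ := hng
      have hmt : (r, t) ∈ YBoxes l := mk_mem_YBoxes.mpr ⟨hrc.1, by omega⟩
      have := hA r t hmt hmem
      omega
    have key : ((Finset.Ico (c1 + 1) (l.getD r 0)).filter fun t =>
          T (r, t) < T (r, c1) ∧ ((r, t) ∈ YBoxes l → T (r, c1) ≤ m (T (r, t)))).card
        = ((Finset.Ico (c1 + 1) (l.getD r 0)).filter fun t =>
            T (r, t) < T (r, c1) ∧
              ((r, t + 1) ∈ YBoxes l → T (r, c1) ≤ m (T (r, t + 1)))).card := by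
      have h := countAux (fun t => T (r, t) < T (r, c1))
        (fun t => (r, t) ∈ YBoxes l → T (r, c1) ≤ m (T (r, t)))
        (l.getD r 0) hgb hH2 hH3 (l.getD r 0 - (c1 + 1)) (c1 + 1) rfl (by omega)
      beta_reduce at h
      rw [if_pos hga] at h
      have h2 := h.trans (Nat.add_zero _)
      convert h2.symm using 2 <;> congr!
    exact t2.trans (key.trans t3.symm)
  rw [stepA, stepB, stepC, stepD, stepE]

/-- Theorem on Betti numbers of regular Hessenberg varieties,
combinatorial form: for a Hessenberg function `m` of length `n`, a partition `l` of `n`,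
and `α = l.reverse` the reversed composition, the number of admissible tableaux of shape
`l` for `m` with Tymoczko statistic `d` equals the number of sequencings `q` of `[n]`
such that `(q, α)` is an ordered path cover of the complement digraph of `D(m)` with
`des q = d`. -/
theorem tableau_count_eq_opc_count
    (n d : ℕ) (m : ℕ → ℕ) (hm : IsHess n m) (l : List ℕ) (hl : IsPartitionOf n l) :
    Nat.card {T : ℕ × ℕ → ℕ //
        IsTableau n l T ∧ Admissible m l T ∧ dimT m l T = d}
    = Nat.card {q : List ℕ //
        IsOPC (Finset.Icc 1 n) (Dcomp (Finset.Icc 1 n) (Dm n m)) q l.reverse ∧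
        desStat (Dcomp (Finset.Icc 1 n) (Dm n m)) q = d} := by
  have hn : l.sum = n := hl.2.2
  apply Nat.card_congr
  have hqlen : ∀ q : List ℕ,
      IsOPC (Finset.Icc 1 n) (Dcomp (Finset.Icc 1 n) (Dm n m)) q l.reverse →
        q.length = l.sum := by
    intro q hq
    have h := hq.2.1.2
    rw [List.sum_reverse] at h
    omega
  exact {
    toFun := fun x => ⟨seqOf l x.1, isOPC_seqOf hl x.2.1 x.2.2.1,
      by rw [desStat_seqOf hm hl x.2.1 x.2.2.1]; exact x.2.2.2⟩
    invFun := fun y =>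
      ⟨tabOf l y.1,
       tabOf_isTableau hn y.2.1.1.1 y.2.1.1.2 (hqlen y.1 y.2.1),
       tabOf_admissible hl y.2.1,
       by
        have h1 := desStat_seqOf hm hl
          (tabOf_isTableau hn y.2.1.1.1 y.2.1.1.2 (hqlen y.1 y.2.1))
          (tabOf_admissible hl y.2.1)
        rw [seqOf_tabOf (hqlen y.1 y.2.1)] at h1
        rw [← h1]
        exact y.2.2⟩
    left_inv := fun x => Subtype.ext (tabOf_seqOf x.2.1)
    right_inv := fun y => Subtype.ext (seqOf_tabOf (hqlen y.1 y.2.1)) }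

end
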